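/- Let ℓ > n ≥ 1. The number of surjective words ω : Fin ℓ → Fin n whose word-graph G_ω is strongly connected equals n! · I(ℓ, n), where I(ℓ, n) is the number of irreducible n-partitions of Fin ℓ. -/

import Mathlib

/-- The edge relation of the word-graph of `ω`: ordered pairs of distinct adjacent letters. -/
def WordEdge {ℓ : ℕ} {α : Type*} (ω : Fin ℓ → α) (a b : α) : Prop :=
  a ≠ b ∧ ∃ i : ℕ, ∃ h : i + 1 < ℓ, ω ⟨i, Nat.lt_of_succ_lt h⟩ = a ∧ ω ⟨i + 1, h⟩ = b

/-- The word-graph of `ω` is strongly connected. -/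
def StronglyConnectedWord {ℓ : ℕ} {α : Type*} (ω : Fin ℓ → α) : Prop :=
  ∀ a ∈ Set.range ω, ∀ b ∈ Set.range ω, Relation.ReflTransGen (WordEdge ω) a b

/-- An `n`-partition of `Fin ℓ` is reducible if some nonempty proper subset of its blocks
has union `{i : Fin ℓ | (i : ℕ) < j}` for some `1 ≤ j < ℓ`. -/
def Reducible {ℓ : ℕ} (P : Finpartition (Finset.univ : Finset (Fin ℓ))) : Prop :=
  ∃ j : ℕ, 1 ≤ j ∧ j < ℓ ∧ ∃ B : Finset (Finset (Fin ℓ)),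
    B.Nonempty ∧ B ⊂ P.parts ∧ B.sup id = Finset.univ.filter (fun i : Fin ℓ => (i : ℕ) < j)

/-- `S ℓ n`: the number of `n`-partitions of `Fin ℓ` (Stirling number of the second kind). -/
noncomputable def S (ℓ n : ℕ) : ℕ :=
  Nat.card {P : Finpartition (Finset.univ : Finset (Fin ℓ)) // P.parts.card = n}

/-- `I ℓ n`: the number of irreducible `n`-partitions of `Fin ℓ`. -/
noncomputable def I (ℓ n : ℕ) : ℕ :=
  Nat.card {P : Finpartition (Finset.univ : Finset (Fin ℓ)) // P.parts.card = n ∧ ¬ Reducible P}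

/-! ### Auxiliary material -/

/-- A "cut" of the word `ω` at position `j`: no letter occurs both before and at-or-after `j`. -/
def Cut {ℓ : ℕ} {α : Type*} (ω : Fin ℓ → α) (j : ℕ) : Prop :=
  1 ≤ j ∧ j < ℓ ∧ ∀ i1 i2 : Fin ℓ, (i1 : ℕ) < j → j ≤ (i2 : ℕ) → ω i1 ≠ ω i2

/-- Walking forward along the word. -/
lemma walk_reach {ℓ : ℕ} {α : Type*} (ω : Fin ℓ → α) (i k : Fin ℓ) (h : (i : ℕ) ≤ (k : ℕ)) :
    Relation.ReflTransGen (WordEdge ω) (ω i) (ω k) := by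
  obtain ⟨k, hk⟩ := k
  induction k with
  | zero =>
    have : i = ⟨0, hk⟩ := Fin.ext (Nat.le_zero.mp h)
    rw [this]
  | succ m ih =>
    have hm : m < ℓ := Nat.lt_of_succ_lt hk
    have step : Relation.ReflTransGen (WordEdge ω) (ω ⟨m, hm⟩) (ω ⟨m + 1, hk⟩) := by
      by_cases he : ω ⟨m, hm⟩ = ω ⟨m + 1, hk⟩
      · rw [he]
      · exact Relation.ReflTransGen.single ⟨he, m, hk, rfl, rfl⟩
    rcases Nat.lt_or_ge (i : ℕ) (m + 1) with hi | hi
    · exact (ih hm (Nat.lt_succ_iff.mp hi)).trans step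
    · have : i = ⟨m + 1, hk⟩ := Fin.ext (le_antisymm h hi)
      rw [this]

lemma sc_iff_no_cut {ℓ : ℕ} {α : Type*} (ω : Fin ℓ → α) (hℓ : 0 < ℓ) :
    StronglyConnectedWord ω ↔ ¬ ∃ j, Cut ω j := by
  constructor
  · rintro hsc ⟨j, hj1, hjℓ, hcut⟩
    set a := ω ⟨0, hℓ⟩ with ha
    set b := ω ⟨j, hjℓ⟩ with hb
    have hreach : Relation.ReflTransGen (WordEdge ω) b a :=
      hsc b ⟨_, rfl⟩ a ⟨_, rfl⟩
    -- invariant: every occurrence is at a position ≥ j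
    have key : ∀ c, Relation.ReflTransGen (WordEdge ω) b c →
        ∀ i : Fin ℓ, ω i = c → j ≤ (i : ℕ) := by
      intro c hc
      induction hc with
      | refl =>
        intro i hi
        by_contra hlt
        exact hcut i ⟨j, hjℓ⟩ (Nat.lt_of_not_le hlt) le_rfl hi
      | @tail c d _ hedge ih =>
        intro i2 hi2
        obtain ⟨hne, m, hm, hm1, hm2⟩ := hedge
        have hjm : j ≤ m := ih ⟨m, Nat.lt_of_succ_lt hm⟩ hm1
        by_contra hlt
        exact hcut i2 ⟨m + 1, hm⟩ (Nat.lt_of_not_le hlt)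
          (le_trans hjm (Nat.le_succ m)) (hi2.trans hm2.symm)
    have h0 : j ≤ 0 := key a hreach ⟨0, hℓ⟩ rfl
    omega
  · intro hnc
    -- every letter reaches ω 0
    have back : ∀ k : Fin ℓ, Relation.ReflTransGen (WordEdge ω) (ω k) (ω ⟨0, hℓ⟩) := by
      by_contra hbad
      push_neg at hbad
      have hex : ∃ m : ℕ, ∃ hm : m < ℓ,
          ¬ Relation.ReflTransGen (WordEdge ω) (ω ⟨m, hm⟩) (ω ⟨0, hℓ⟩) := by
        obtain ⟨k, hk⟩ := hbad
        exact ⟨k, k.2, by simpa using hk⟩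
      classical
      let j := Nat.find hex
      obtain ⟨hjℓ, hjbad⟩ := Nat.find_spec hex
      have hmin : ∀ m < j, ∀ hm : m < ℓ,
          Relation.ReflTransGen (WordEdge ω) (ω ⟨m, hm⟩) (ω ⟨0, hℓ⟩) := by
        intro m hmj hm
        by_contra hno
        exact Nat.find_min hex hmj ⟨hm, hno⟩
      have hj1 : 1 ≤ j := by
        rcases Nat.eq_zero_or_pos j with h0 | h1
        · exfalso; apply hjbad; rw [show (⟨j, hjℓ⟩ : Fin ℓ) = ⟨0, hℓ⟩ from Fin.ext h0]
        · exact h1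
      apply hnc
      refine ⟨j, hj1, hjℓ, ?_⟩
      intro i1 i2 h1 h2 heq
      apply hjbad
      have r1 : Relation.ReflTransGen (WordEdge ω) (ω ⟨j, hjℓ⟩) (ω i2) :=
        walk_reach ω ⟨j, hjℓ⟩ i2 h2
      have r2 : Relation.ReflTransGen (WordEdge ω) (ω i1) (ω ⟨0, hℓ⟩) := by
        have := hmin (i1 : ℕ) h1 i1.2
        simpa using this
      rw [← heq] at r1
      exact r1.trans r2
    intro x hx y hy
    obtain ⟨i, rfl⟩ := hx
    obtain ⟨k, rfl⟩ := hy
    exact (back i).trans (walk_reach ω ⟨0, hℓ⟩ k (Nat.zero_le _))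

instance kerDec {ℓ n : ℕ} (ω : Fin ℓ → Fin n) : DecidableRel (Setoid.ker ω).r :=
  fun a b => inferInstanceAs (Decidable (ω a = ω b))

/-- The fiber partition of a word. -/
def fiberP {ℓ n : ℕ} (ω : Fin ℓ → Fin n) : Finpartition (Finset.univ : Finset (Fin ℓ)) :=
  Finpartition.ofSetoid (Setoid.ker ω)

lemma mem_fiberP_part {ℓ n : ℕ} (ω : Fin ℓ → Fin n) (a b : Fin ℓ) :
    b ∈ (fiberP ω).part a ↔ ω a = ω b :=
  Finpartition.mem_part_ofSetoid_iff_rel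

lemma parts_eq_image_part {α : Type*} [Fintype α] [DecidableEq α]
    (P : Finpartition (Finset.univ : Finset α)) :
    Finset.univ.image P.part = P.parts := by
  ext t
  simp only [Finset.mem_image, Finset.mem_univ, true_and]
  constructor
  · rintro ⟨a, rfl⟩; exact P.part_mem.2 (Finset.mem_univ a)
  · intro ht
    obtain ⟨a, _, ha⟩ := P.part_surjOn ht
    exact ⟨a, ha⟩

lemma red_iff_cut {ℓ n : ℕ} (ω : Fin ℓ → Fin n) :
    Reducible (fiberP ω) ↔ ∃ j, Cut ω j := by
  constructor
  · rintro ⟨j, hj1, hjℓ, B, hBne, hBsub, hsup⟩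
    refine ⟨j, hj1, hjℓ, ?_⟩
    intro i1 i2 h1 h2 heq
    have hi1 : i1 ∈ B.sup id := by
      rw [hsup]; simp [h1]
    rw [Finset.mem_sup] at hi1
    obtain ⟨t, htB, hit⟩ := hi1
    have htP : t ∈ (fiberP ω).parts := hBsub.1 htB
    have hpart : (fiberP ω).part i1 = t := Finpartition.part_eq_of_mem _ htP hit
    have hi2t : i2 ∈ t := by
      rw [← hpart, mem_fiberP_part]; exact heq
    have : i2 ∈ B.sup id := Finset.mem_sup.mpr ⟨t, htB, hi2t⟩
    rw [hsup] at this
    simp only [Finset.mem_filter, Finset.mem_univ, true_and] at this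
    omega
  · rintro ⟨j, hj1, hjℓ, hcut⟩
    classical
    refine ⟨j, hj1, hjℓ,
      (fiberP ω).parts.filter (fun t => t ⊆ Finset.univ.filter (fun i : Fin ℓ => (i : ℕ) < j)),
      ?_, ?_, ?_⟩
    · -- nonempty: the part of position 0
      have h0 : (0 : ℕ) < ℓ := lt_trans (by omega) hjℓ
      refine ⟨(fiberP ω).part ⟨0, h0⟩, Finset.mem_filter.mpr
        ⟨(fiberP ω).part_mem.2 (Finset.mem_univ _), ?_⟩⟩
      intro x hx
      rw [mem_fiberP_part] at hx
      simp only [Finset.mem_filter, Finset.mem_univ, true_and]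
      by_contra hge
      exact hcut ⟨0, h0⟩ x hj1 (Nat.le_of_not_lt hge) hx
    · refine Finset.ssubset_iff_of_subset (Finset.filter_subset _ _) |>.mpr ?_
      refine ⟨(fiberP ω).part ⟨j, hjℓ⟩, (fiberP ω).part_mem.2 (Finset.mem_univ _), ?_⟩
      intro hmem
      have hsub := (Finset.mem_filter.mp hmem).2
      have : (⟨j, hjℓ⟩ : Fin ℓ) ∈ (fiberP ω).part ⟨j, hjℓ⟩ :=
        (fiberP ω).mem_part (Finset.mem_univ _)
      have := hsub this
      simp only [Finset.mem_filter, Finset.mem_univ, true_and] at this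
      omega
    · apply le_antisymm
      · refine Finset.sup_le ?_
        intro t ht
        exact (Finset.mem_filter.mp ht).2
      · intro i hi
        simp only [Finset.mem_filter, Finset.mem_univ, true_and] at hi
        refine Finset.mem_sup.mpr ⟨(fiberP ω).part i, ?_, (fiberP ω).mem_part (Finset.mem_univ _)⟩
        refine Finset.mem_filter.mpr ⟨(fiberP ω).part_mem.2 (Finset.mem_univ _), ?_⟩
        intro x hx
        rw [mem_fiberP_part] at hx
        simp only [Finset.mem_filter, Finset.mem_univ, true_and]
        by_contra hge
        exact hcut i x hi (Nat.le_of_not_lt hge) hx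

lemma fiberP_parts_card {ℓ n : ℕ} {ω : Fin ℓ → Fin n} (hs : Function.Surjective ω) :
    (fiberP ω).parts.card = n := by
  classical
  have hpart : ∀ a : Fin ℓ, (fiberP ω).part a
      = Finset.univ.filter (fun b => ω b = ω a) := by
    intro a
    ext x
    rw [mem_fiberP_part]
    simp [eq_comm]
  have himg : (fiberP ω).parts
      = Finset.univ.image (fun c : Fin n => Finset.univ.filter (fun b => ω b = c)) := by
    rw [← parts_eq_image_part (fiberP ω)]
    ext t
    simp only [Finset.mem_image, Finset.mem_univ, true_and]
    constructor
    · rintro ⟨a, rfl⟩; exact ⟨ω a, (hpart a).symm⟩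
    · rintro ⟨c, rfl⟩
      obtain ⟨a, rfl⟩ := hs c
      exact ⟨a, hpart a⟩
  rw [himg, Finset.card_image_of_injective _ ?_, Finset.card_univ, Fintype.card_fin]
  intro c c' hcc
  obtain ⟨b, rfl⟩ := hs c
  simp only [] at hcc
  have : b ∈ Finset.univ.filter (fun x => ω x = c') := by
    rw [← hcc]; simp
  simpa using this

/-- The words with a given fiber partition correspond to labelings of its parts. -/
noncomputable def fiberEquiv {ℓ n : ℕ} (P : Finpartition (Finset.univ : Finset (Fin ℓ))) :
    {ω : Fin ℓ → Fin n // Function.Surjective ω ∧ fiberP ω = P} ≃ (↥P.parts ≃ Fin n) where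
  toFun a := by
    obtain ⟨ω, hs, hfib⟩ := a
    have hmem_iff : ∀ a x : Fin ℓ, x ∈ P.part a ↔ ω a = ω x := fun a x => by
      rw [← hfib]; exact mem_fiberP_part ω a x
    refine Equiv.ofBijective
      (fun t : ↥P.parts => ω (t.1.min' (P.nonempty_of_mem_parts t.2))) ⟨?_, ?_⟩
    · rintro ⟨t, ht⟩ ⟨t', ht'⟩ hee
      simp only at hee
      have h1 : t'.min' (P.nonempty_of_mem_parts ht')
          ∈ P.part (t.min' (P.nonempty_of_mem_parts ht)) := (hmem_iff _ _).mpr hee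
      have h2 : P.part (t.min' (P.nonempty_of_mem_parts ht)) = t :=
        P.part_eq_of_mem ht (Finset.min'_mem _ _)
      exact Subtype.ext (P.eq_of_mem_parts ht ht' (h2 ▸ h1) (Finset.min'_mem _ _))
    · intro c
      obtain ⟨i, rfl⟩ := hs c
      exact ⟨⟨P.part i, P.part_mem.2 (Finset.mem_univ i)⟩,
        ((hmem_iff i _).mp (Finset.min'_mem _ _)).symm⟩
  invFun e := by
    refine ⟨fun i => e ⟨P.part i, P.part_mem.2 (Finset.mem_univ i)⟩, ?_, ?_⟩
    · intro c
      refine ⟨(e.symm c).1.min' (P.nonempty_of_mem_parts (e.symm c).2), ?_⟩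
      have key : (⟨P.part ((e.symm c).1.min' (P.nonempty_of_mem_parts (e.symm c).2)),
          P.part_mem.2 (Finset.mem_univ _)⟩ : ↥P.parts) = e.symm c :=
        Subtype.ext (P.part_eq_of_mem (e.symm c).2 (Finset.min'_mem _ _))
      show e _ = c
      rw [key, Equiv.apply_symm_apply]
    · set ω' := fun i => e ⟨P.part i, P.part_mem.2 (Finset.mem_univ i)⟩ with hω'
      have hpt : (fiberP ω').part = P.part := by
        funext i
        ext x
        rw [mem_fiberP_part]
        simp only [hω']
        rw [e.apply_eq_iff_eq, Subtype.mk.injEq]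
        rw [P.mem_part_iff_part_eq_part (Finset.mem_univ x) (Finset.mem_univ i)]
        exact eq_comm
      ext t
      rw [← parts_eq_image_part (fiberP ω'), ← parts_eq_image_part P, hpt]
  left_inv := by
    rintro ⟨ω, hs, hfib⟩
    have hmem_iff : ∀ a x : Fin ℓ, x ∈ P.part a ↔ ω a = ω x := fun a x => by
      rw [← hfib]; exact mem_fiberP_part ω a x
    apply Subtype.ext
    funext i
    show ω ((P.part i).min' (P.nonempty_of_mem_parts (P.part_mem.2 (Finset.mem_univ i)))) = ω i
    exact ((hmem_iff i _).mp (Finset.min'_mem _ _)).symm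
  right_inv := by
    intro e
    apply Equiv.ext
    rintro ⟨t, ht⟩
    show e ⟨P.part (t.min' (P.nonempty_of_mem_parts ht)), P.part_mem.2 (Finset.mem_univ _)⟩
        = e ⟨t, ht⟩
    exact congrArg e (Subtype.ext (P.part_eq_of_mem ht (Finset.min'_mem _ _)))

/-- For `ℓ > n ≥ 1`, the number of surjective words `Fin ℓ → Fin n` with strongly
connected word-graph is `n! · I(ℓ, n)`. -/
theorem card_stronglyConnected_words (ℓ n : ℕ) (hn : 1 ≤ n) (hℓ : n < ℓ) :
    Nat.card {ω : Fin ℓ → Fin n // Function.Surjective ω ∧ StronglyConnectedWord ω}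
      = n.factorial * I ℓ n := by
  classical
  have hℓ0 : 0 < ℓ := lt_of_le_of_lt (Nat.zero_le n) hℓ
  let B := {P : Finpartition (Finset.univ : Finset (Fin ℓ)) //
    P.parts.card = n ∧ ¬ Reducible P}
  let A := {ω : Fin ℓ → Fin n // Function.Surjective ω ∧ StronglyConnectedWord ω}
  let F : A → B := fun a => ⟨fiberP a.1, fiberP_parts_card a.2.1, by
    rw [red_iff_cut]
    exact (sc_iff_no_cut a.1 hℓ0).mp a.2.2⟩
  have e2 : ∀ b : B, {a : A // F a = b}
      ≃ {ω : Fin ℓ → Fin n // Function.Surjective ω ∧ fiberP ω = b.1} := by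
    intro b
    refine ⟨fun a => ⟨a.1.1, a.1.2.1, congrArg Subtype.val a.2⟩,
      fun ω => ⟨⟨ω.1, ω.2.1, ?_⟩, Subtype.ext ω.2.2⟩, ?_, ?_⟩
    · refine (sc_iff_no_cut ω.1 hℓ0).mpr fun hc => b.2.2 ?_
      rw [← ω.2.2]
      exact (red_iff_cut ω.1).mpr hc
    · rintro ⟨⟨ω, hω⟩, ha⟩
      rfl
    · rintro ⟨ω, hω⟩
      rfl
  have e3 : ∀ b : B, (↥(b.1.parts) ≃ Fin n) ≃ Fin (n.factorial) := by
    intro b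
    apply Fintype.equivFinOfCardEq
    have hcard : Fintype.card ↥(b.1.parts) = n := by
      rw [Fintype.card_coe]; exact b.2.1
    rw [Fintype.card_equiv (Fintype.equivFinOfCardEq hcard), hcard]
  have E : A ≃ B × Fin (n.factorial) :=
    ((Equiv.sigmaFiberEquiv F).symm.trans
      (Equiv.sigmaCongrRight fun b => ((e2 b).trans (fiberEquiv b.1)).trans (e3 b))).trans
      (Equiv.sigmaEquivProd B (Fin n.factorial))
  rw [Nat.card_congr E, Nat.card_prod]
  have h1 : Nat.card (Fin n.factorial) = n.factorial :=
    Nat.card_eq_fintype_card.trans (Fintype.card_fin _)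
  have h2 : Nat.card B = I ℓ n := rfl
  rw [h1, h2, mul_comm]
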